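/- Let N be a finite set with n = |N| ≥ 1 and let v : 𝒫(N) → ℝ be any set function. Then the Shapley values satisfy the efficiency identity ∑_{i ∈ N} ∑_{S ⊆ N∖{i}} (|S|!·(n−1−|S|)!/n!) · (v(S∪{i}) − v(S)) = v(N) − v(∅). -/

import Mathlib

open Finset

theorem shapley_efficiency {ι : Type*} [Fintype ι] [DecidableEq ι]
    (hn : 1 ≤ Fintype.card ι) (v : Finset ι → ℝ) :
    ∑ i : ι, ∑ S ∈ ((univ : Finset ι).erase i).powerset,
        ((S.card.factorial * (Fintype.card ι - 1 - S.card).factorial : ℕ) : ℝ) /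
            ((Fintype.card ι).factorial : ℝ) *
          (v (insert i S) - v S)
      = v univ - v ∅ := by
  set n := Fintype.card ι with hcard
  set p : ℕ → ℝ := fun k =>
    ((k.factorial * (n - 1 - k).factorial : ℕ) : ℝ) / (n.factorial : ℝ) with hp
  have hne : (n.factorial : ℝ) ≠ 0 := by exact_mod_cast n.factorial_ne_zero
  have memP : ∀ (i : ι) (S : Finset ι),
      S ∈ ((univ : Finset ι).erase i).powerset ↔ i ∉ S := by
    intro i S
    simp [Finset.subset_erase]
  have hA : ∀ i : ι, ∑ S ∈ ((univ : Finset ι).erase i).powerset,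
      p S.card * v (insert i S)
      = ∑ T ∈ (univ : Finset ι).powerset.filter (fun T => i ∈ T),
          p (T.card - 1) * v T := by
    intro i
    refine Finset.sum_nbij' (fun S => insert i S) (fun T => T.erase i) ?_ ?_ ?_ ?_ ?_
    · intro S hS
      simp [Finset.mem_filter]
    · intro T hT
      rw [memP]
      simp
    · intro S hS
      rw [memP] at hS
      exact Finset.erase_insert hS
    · intro T hT
      simp only [Finset.mem_filter] at hT
      exact Finset.insert_erase hT.2
    · intro S hS
      rw [memP] at hS
      rw [Finset.card_insert_of_notMem hS]
      simp
  have hB : ∀ i : ι, ∑ S ∈ ((univ : Finset ι).erase i).powerset,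
      p S.card * v S
      = ∑ S ∈ (univ : Finset ι).powerset.filter (fun S => i ∉ S),
          p S.card * v S := by
    intro i
    apply Finset.sum_congr
    · ext S
      simp [memP, Finset.mem_filter]
    · intros; rfl
  have main : ∑ i : ι, ∑ S ∈ ((univ : Finset ι).erase i).powerset,
      p S.card * (v (insert i S) - v S)
      = ∑ T ∈ (univ : Finset ι).powerset,
          ((T.card : ℝ) * (p (T.card - 1) * v T)
            - ((n : ℝ) - T.card) * (p T.card * v T)) := by
    have this1 : ∀ i : ι, ∑ S ∈ ((univ : Finset ι).erase i).powerset,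
        p S.card * (v (insert i S) - v S)
        = (∑ T ∈ (univ : Finset ι).powerset, if i ∈ T then p (T.card - 1) * v T else 0)
          - (∑ T ∈ (univ : Finset ι).powerset, if i ∉ T then p T.card * v T else 0) := by
      intro i
      simp only [mul_sub]
      rw [Finset.sum_sub_distrib, hA i, hB i, Finset.sum_filter, Finset.sum_filter]
    rw [Finset.sum_congr rfl (fun i _ => this1 i), Finset.sum_sub_distrib,
      Finset.sum_comm, Finset.sum_comm (s := univ), ← Finset.sum_sub_distrib]
    apply Finset.sum_congr rfl
    intro T hT
    have hc : T.card ≤ n := by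
      rw [hcard, ← Finset.card_univ]
      exact Finset.card_le_card (Finset.mem_powerset.mp hT)
    have h1 : (∑ i : ι, if i ∈ T then p (T.card - 1) * v T else 0)
        = (T.card : ℝ) * (p (T.card - 1) * v T) := by
      rw [Finset.sum_ite_mem, univ_inter, Finset.sum_const, nsmul_eq_mul]
    have h2 : (∑ i : ι, if i ∉ T then p T.card * v T else 0)
        = ((n : ℝ) - T.card) * (p T.card * v T) := by
      have e : (fun i : ι => if i ∉ T then p T.card * v T else 0)
          = fun i => if i ∈ Tᶜ then p T.card * v T else 0 := by
        funext i; simp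
      rw [e, Finset.sum_ite_mem, univ_inter, Finset.sum_const, nsmul_eq_mul,
        Finset.card_compl, Nat.cast_sub hc]
    rw [h1, h2]
  have key : ∀ t : ℕ, 1 ≤ t → t < n → (t : ℝ) * p (t - 1) = ((n : ℝ) - t) * p t := by
    intro t ht1 ht2
    have hle : t ≤ n := le_of_lt ht2
    have hnat : t * ((t - 1).factorial * (n - 1 - (t - 1)).factorial)
        = (n - t) * (t.factorial * (n - 1 - t).factorial) := by
      have f1 : t * (t - 1).factorial = t.factorial := Nat.mul_factorial_pred (by omega)
      have f2 : (n - t) * (n - t - 1).factorial = (n - t).factorial :=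
        Nat.mul_factorial_pred (by omega)
      have e1 : n - 1 - (t - 1) = n - t := by omega
      have e4 : n - t - 1 = n - 1 - t := by omega
      calc t * ((t - 1).factorial * (n - 1 - (t - 1)).factorial)
          = (t * (t - 1).factorial) * (n - t).factorial := by rw [e1]; ring
        _ = t.factorial * (n - t).factorial := by rw [f1]
        _ = t.factorial * ((n - t) * (n - 1 - t).factorial) := by rw [← e4, f2]
        _ = (n - t) * (t.factorial * (n - 1 - t).factorial) := by ring
    have hcast := congrArg (Nat.cast : ℕ → ℝ) hnat
    push_cast [hle] at hcast
    rw [hp]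
    simp only
    field_simp
    push_cast
    linarith [hcast]
  have hNe : (univ : Finset ι).Nonempty := by
    rw [← Finset.card_pos, Finset.card_univ]; omega
  have coeff1 : (n : ℝ) * p (n - 1) = 1 := by
    rw [hp]; simp only
    rw [show n - 1 - (n - 1) = 0 from by omega, Nat.factorial_zero, mul_one]
    field_simp
    exact_mod_cast Nat.mul_factorial_pred (by omega)
  have coeff0 : (n : ℝ) * p 0 = 1 := by
    rw [hp]; simp only
    rw [Nat.factorial_zero, one_mul, Nat.sub_zero]
    field_simp
    exact_mod_cast Nat.mul_factorial_pred (by omega)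
  have finale : ∑ T ∈ (univ : Finset ι).powerset,
      ((T.card : ℝ) * (p (T.card - 1) * v T)
        - ((n : ℝ) - T.card) * (p T.card * v T))
      = v univ - v ∅ := by
    have hterm : ∀ T ∈ (univ : Finset ι).powerset,
        ((T.card : ℝ) * (p (T.card - 1) * v T) - ((n : ℝ) - T.card) * (p T.card * v T))
        = (if T = univ then v T else 0) - (if T = ∅ then v T else 0) := by
      intro T hT
      by_cases hTu : T = univ
      · subst hTu
        rw [if_pos rfl, if_neg (by
          intro h; rw [h] at hNe; exact Finset.not_nonempty_empty hNe)]
        rw [Finset.card_univ, ← hcard, ← mul_assoc, coeff1]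
        ring
      · by_cases hT0 : T = ∅
        · subst hT0
          rw [if_neg hTu, if_pos rfl, Finset.card_empty]
          push_cast
          linear_combination (-(v ∅)) * coeff0
        · rw [if_neg hTu, if_neg hT0]
          have ht1 : 1 ≤ T.card := Finset.card_pos.mpr (Finset.nonempty_iff_ne_empty.mpr hT0)
          have ht2 : T.card < n := by
            rw [hcard, ← Finset.card_univ]
            exact Finset.card_lt_card (Finset.ssubset_univ_iff.mpr hTu)
          have := key T.card ht1 ht2
          rw [← mul_assoc, ← mul_assoc, this]
          ring
    rw [Finset.sum_congr rfl hterm, Finset.sum_sub_distrib]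
    congr 1
    · rw [Finset.sum_ite_eq' (univ : Finset ι).powerset univ v,
        if_pos (Finset.mem_powerset.mpr (subset_refl _))]
    · rw [Finset.sum_ite_eq' (univ : Finset ι).powerset ∅ v,
        if_pos (Finset.mem_powerset.mpr (Finset.empty_subset _))]
  calc ∑ i : ι, ∑ S ∈ ((univ : Finset ι).erase i).powerset,
        ((S.card.factorial * (n - 1 - S.card).factorial : ℕ) : ℝ) /
            (n.factorial : ℝ) * (v (insert i S) - v S)
      = ∑ i : ι, ∑ S ∈ ((univ : Finset ι).erase i).powerset,
          p S.card * (v (insert i S) - v S) := rfl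
    _ = _ := main.trans finale
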